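/- (Corollary 1, covariance-ordering part.) For every Markov transition kernel R on Y having f_Y as invariant density and every measurable h : X → ℝ with ∫_X h² f_X dμ_x < ∞ and ∫_X h f_X dμ_x = 0, one has ∫_X ∫_X h(x) h(x') p_R(x|x') f_X(x') μ_x(dx') μ_x(dx) ≤ ∫_X ∫_X h(x) h(x') p(x|x') f_X(x') μ_x(dx') μ_x(dx); that is, p_R dominates the DA algorithm p in the covariance ordering. -/

import Mathlib

open MeasureTheory ProbabilityTheory
open scoped ENNReal NNReal

private lemma lintegral_cs {α : Type*} [MeasurableSpace α] (μ : Measure α) {a b : α → ℝ≥0∞}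
    (ha : AEMeasurable a μ) (hb : AEMeasurable b μ) :
    (∫⁻ x, a x * b x ∂μ) ^ 2 ≤ (∫⁻ x, a x ^ 2 ∂μ) * (∫⁻ x, b x ^ 2 ∂μ) := by
  have hpq : Real.HolderConjugate 2 2 := Real.HolderConjugate.two_two
  have H := ENNReal.lintegral_mul_le_Lp_mul_Lq μ hpq ha hb
  simp only [Pi.mul_apply] at H
  have h2 : ∀ c : ℝ≥0∞, c ^ (2 : ℝ) = c ^ (2 : ℕ) := fun c => by
    rw [← ENNReal.rpow_natCast c 2]; norm_num
  simp only [h2] at H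
  calc (∫⁻ x, a x * b x ∂μ) ^ 2
      ≤ ((∫⁻ x, a x ^ 2 ∂μ) ^ (1/2 : ℝ) * (∫⁻ x, b x ^ 2 ∂μ) ^ (1/2 : ℝ)) ^ 2 := by
        exact pow_le_pow_left' H 2
    _ = (∫⁻ x, a x ^ 2 ∂μ) * (∫⁻ x, b x ^ 2 ∂μ) := by
        rw [mul_pow, ← ENNReal.rpow_natCast ((∫⁻ x, a x ^ 2 ∂μ) ^ (1/2 : ℝ)) 2,
          ← ENNReal.rpow_natCast ((∫⁻ x, b x ^ 2 ∂μ) ^ (1/2 : ℝ)) 2,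
          ← ENNReal.rpow_mul, ← ENNReal.rpow_mul]
        norm_num

private lemma ofReal_abs_integral_le {α : Type*} [MeasurableSpace α] (μ : Measure α) (v : α → ℝ) :
    ENNReal.ofReal |∫ x, v x ∂μ| ≤ ∫⁻ x, ENNReal.ofReal |v x| ∂μ := by
  by_cases hv : Integrable v μ
  · calc ENNReal.ofReal |∫ x, v x ∂μ| = ‖∫ x, v x ∂μ‖ₑ := (Real.enorm_eq_ofReal_abs _).symm
      _ ≤ ∫⁻ x, ‖v x‖ₑ ∂μ := enorm_integral_le_lintegral_enorm _
      _ = ∫⁻ x, ENNReal.ofReal |v x| ∂μ := by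
          simp_rw [Real.enorm_eq_ofReal_abs]
  · rw [integral_undef hv]; simp


private lemma ennreal_le_of_sq_le_sq {a b : ℝ≥0∞} (hab : a ^ 2 ≤ b ^ 2) : a ≤ b := by
  have h' := ENNReal.rpow_le_rpow hab (by norm_num : (0:ℝ) ≤ 1/2)
  rwa [← ENNReal.rpow_natCast a 2, ← ENNReal.rpow_natCast b 2, ← ENNReal.rpow_mul,
    ← ENNReal.rpow_mul, show ((2:ℕ):ℝ) * (1/2) = 1 by norm_num, ENNReal.rpow_one,
    ENNReal.rpow_one] at h'

private lemma lintegral_cs_weight {α : Type*} [MeasurableSpace α] (μ : Measure α)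
    {ρ : α → ℝ} (hρ : ∀ a, 0 ≤ ρ a) (mρ : Measurable ρ) {φ ψ : α → ℝ≥0∞}
    (mφ : Measurable φ) (mψ : Measurable ψ) :
    (∫⁻ a, ENNReal.ofReal (ρ a) * (φ a * ψ a) ∂μ) ^ 2
      ≤ (∫⁻ a, ENNReal.ofReal (ρ a) * φ a ^ 2 ∂μ) * (∫⁻ a, ENNReal.ofReal (ρ a) * ψ a ^ 2 ∂μ) := by
  have msq : Measurable fun a => ENNReal.ofReal (Real.sqrt (ρ a)) :=
    ENNReal.measurable_ofReal.comp (Real.continuous_sqrt.measurable.comp mρ)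
  have key := lintegral_cs μ (a := fun a => ENNReal.ofReal (Real.sqrt (ρ a)) * φ a)
    (b := fun a => ENNReal.ofReal (Real.sqrt (ρ a)) * ψ a)
    (msq.mul mφ).aemeasurable (msq.mul mψ).aemeasurable
  have e0 : ∀ a, ENNReal.ofReal (Real.sqrt (ρ a)) * ENNReal.ofReal (Real.sqrt (ρ a))
      = ENNReal.ofReal (ρ a) := by
    intro a
    rw [← ENNReal.ofReal_mul (Real.sqrt_nonneg _), Real.mul_self_sqrt (hρ a)]
  have e1 : ∀ a, (ENNReal.ofReal (Real.sqrt (ρ a)) * φ a) * (ENNReal.ofReal (Real.sqrt (ρ a)) * ψ a)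
      = ENNReal.ofReal (ρ a) * (φ a * ψ a) := by
    intro a
    calc (ENNReal.ofReal (Real.sqrt (ρ a)) * φ a) * (ENNReal.ofReal (Real.sqrt (ρ a)) * ψ a)
        = (ENNReal.ofReal (Real.sqrt (ρ a)) * ENNReal.ofReal (Real.sqrt (ρ a))) * (φ a * ψ a) := by
          ring
      _ = ENNReal.ofReal (ρ a) * (φ a * ψ a) := by rw [e0]
  have e2 : ∀ (χ : α → ℝ≥0∞) a, (ENNReal.ofReal (Real.sqrt (ρ a)) * χ a) ^ 2
      = ENNReal.ofReal (ρ a) * χ a ^ 2 := by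
    intro χ a
    rw [mul_pow, sq, e0]
  simp only [e1, e2] at key
  exact key

/-- Corollary 1 (covariance-ordering part): for every Markov transition kernel `R` on `Y`
with invariant density `f_Y`, the chain `p_R` dominates the DA chain `p` in the covariance
ordering with respect to `f_X`. -/
theorem pR_dominates_da_covariance
    {X Y : Type*}
    [MetricSpace X] [TopologicalSpace.SeparableSpace X] [LocallyCompactSpace X]
    [MeasurableSpace X] [BorelSpace X]
    [MetricSpace Y] [TopologicalSpace.SeparableSpace Y] [LocallyCompactSpace Y]
    [MeasurableSpace Y] [BorelSpace Y]
    (μx : Measure X) (μy : Measure Y) [SigmaFinite μx] [SigmaFinite μy]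
    (f : X → Y → ℝ)
    (hf_meas : Measurable (Function.uncurry f))
    (hf_nonneg : ∀ x y, 0 ≤ f x y)
    (hf_prob : ∫ q, f q.1 q.2 ∂(μx.prod μy) = 1)
    (fX : X → ℝ) (hfX : ∀ x, fX x = ∫ y, f x y ∂μy)
    (fY : Y → ℝ) (hfY : ∀ y, fY y = ∫ x, f x y ∂μx)
    (hfX_pos : ∀ x, 0 < fX x) (hfY_pos : ∀ y, 0 < fY y)
    (fXY : X → Y → ℝ) (hfXY : ∀ x y, fXY x y = f x y / fY y)
    (fYX : Y → X → ℝ) (hfYX : ∀ y x, fYX y x = f x y / fX x)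
    (p : X → X → ℝ) (hp : ∀ x x', p x x' = ∫ y, fXY x y * fYX y x' ∂μy)
    (R : Kernel Y Y) [IsMarkovKernel R]
    (hR_inv : ∀ A : Set Y, MeasurableSet A →
      ∫ y, ((R y) A).toReal * fY y ∂μy = ∫ y in A, fY y ∂μy)
    (pR : X → X → ℝ)
    (hpR : ∀ x x', pR x x' = ∫ y, (∫ y', fXY x y' ∂(R y)) * fYX y x' ∂μy) :
    ∀ h : X → ℝ, Measurable h →
      Integrable (fun x => h x ^ 2 * fX x) μx →
      (∫ x, h x * fX x ∂μx) = 0 →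
      ∫ x, (∫ x', h x * h x' * pR x x' * fX x' ∂μx) ∂μx
        ≤ ∫ x, (∫ x', h x * h x' * p x x' * fX x' ∂μx) ∂μx := by
  intro h mh hL2 _h0
  -- measurability of basic data
  have mf : Measurable fun q : X × Y => f q.1 q.2 := hf_meas
  have mf1 : ∀ y, Measurable fun x => f x y := fun y =>
    mf.comp (measurable_id.prodMk measurable_const)
  have mf2 : ∀ x, Measurable (f x) := fun x =>
    mf.comp (measurable_const.prodMk measurable_id)
  -- integrability of f on the product and of its sections
  have hfprod_int : Integrable (fun q : X × Y => f q.1 q.2) (μx.prod μy) := by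
    by_contra hni
    rw [integral_undef hni] at hf_prob
    exact zero_ne_one hf_prob
  have hfy_int : ∀ y, Integrable (fun x => f x y) μx := by
    intro y; by_contra hni
    have h0' := hfY y; rw [integral_undef hni] at h0'
    exact (hfY_pos y).ne' h0'
  have hfx_int : ∀ x, Integrable (f x) μy := by
    intro x; by_contra hni
    have h0' := hfX x; rw [integral_undef hni] at h0'
    exact (hfX_pos x).ne' h0'
  -- densities in ℝ≥0∞
  set c : Y → ℝ≥0∞ := fun y => ENNReal.ofReal (fY y) with hc
  have hc0 : ∀ y, c y ≠ 0 := fun y => by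
    simp [hc, ENNReal.ofReal_eq_zero, not_le, hfY_pos y]
  have hct : ∀ y, c y ≠ ∞ := fun y => ENNReal.ofReal_ne_top
  have lmY : ∀ y, ∫⁻ x, ENNReal.ofReal (f x y) ∂μx = c y := by
    intro y
    rw [hc]
    simp only [hfY y]
    exact (ofReal_integral_eq_lintegral_ofReal (hfy_int y)
      (Filter.Eventually.of_forall fun x => hf_nonneg x y)).symm
  have lmX : ∀ x, ∫⁻ y, ENNReal.ofReal (f x y) ∂μy = ENNReal.ofReal (fX x) := by
    intro x
    simp only [hfX x]
    exact (ofReal_integral_eq_lintegral_ofReal (hfx_int x)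
      (Filter.Eventually.of_forall fun y => hf_nonneg x y)).symm
  have mfY : Measurable fY := by
    have hrw : fY = fun y => (∫⁻ x, ENNReal.ofReal (f x y) ∂μx).toReal := by
      funext y; rw [lmY y, hc, ENNReal.toReal_ofReal (hfY_pos y).le]
    rw [hrw]
    exact (Measurable.lintegral_prod_left' (ENNReal.measurable_ofReal.comp mf)).ennreal_toReal
  have mc : Measurable c := ENNReal.measurable_ofReal.comp mfY
  have hfY_int : Integrable fY μy := by
    have := hfprod_int.integral_prod_right
    exact this.congr (Filter.Eventually.of_forall fun y => (hfY y).symm)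
  -- the main auxiliary functions
  set B : X → Y → ℝ := fun x y => h x * f x y with hB
  set A : X → Y → ℝ := fun x y => h x * f x y / fY y with hA
  set G : Y → ℝ := fun y => ∫ x, B x y ∂μx with hG
  set g : Y → ℝ := fun y => G y / fY y with hg
  have mB : Measurable fun q : X × Y => B q.1 q.2 := (mh.comp measurable_fst).mul mf
  have mA : Measurable fun q : X × Y => A q.1 q.2 := mB.div (mfY.comp measurable_snd)
  have mG : StronglyMeasurable G :=
    MeasureTheory.StronglyMeasurable.integral_prod_left' (f := fun q : X × Y => B q.1 q.2)
      mB.stronglyMeasurable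
  have mg : Measurable g := mG.measurable.div mfY
  -- ℝ≥0∞-valued square and absolute-value integrals
  set HF : Y → ℝ≥0∞ := fun y => ∫⁻ x, ENNReal.ofReal (h x ^ 2 * f x y) ∂μx with hHFdef
  set LB : Y → ℝ≥0∞ := fun y => ∫⁻ x, ENNReal.ofReal (|h x| * f x y) ∂μx with hLBdef
  have mHF : Measurable HF := by
    apply Measurable.lintegral_prod_left' (f := fun q : X × Y =>
      ENNReal.ofReal (h q.1 ^ 2 * f q.1 q.2))
    exact ENNReal.measurable_ofReal.comp (((mh.pow_const 2).comp measurable_fst).mul mf)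
  have mLB : Measurable LB := by
    apply Measurable.lintegral_prod_left' (f := fun q : X × Y =>
      ENNReal.ofReal (|h q.1| * f q.1 q.2))
    exact ENNReal.measurable_ofReal.comp ((mh.abs.comp measurable_fst).mul mf)
  set M : ℝ≥0∞ := ENNReal.ofReal (∫ x, h x ^ 2 * fX x ∂μx) with hM
  have hMne : M ≠ ∞ := ENNReal.ofReal_ne_top
  have hHFM : ∫⁻ y, HF y ∂μy = M := by
    have mE : Measurable (Function.uncurry fun x y => ENNReal.ofReal (h x ^ 2 * f x y)) := by
      apply ENNReal.measurable_ofReal.comp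
      exact ((mh.pow_const 2).comp measurable_fst).mul mf
    have hswap := lintegral_lintegral_swap (μ := μx) (ν := μy)
      (f := fun x y => ENNReal.ofReal (h x ^ 2 * f x y)) mE.aemeasurable
    simp only [hHFdef]
    rw [← hswap]
    calc ∫⁻ x, ∫⁻ y, ENNReal.ofReal (h x ^ 2 * f x y) ∂μy ∂μx
        = ∫⁻ x, ENNReal.ofReal (h x ^ 2) * ENNReal.ofReal (fX x) ∂μx := by
          apply lintegral_congr; intro x
          rw [← lmX x, ← lintegral_const_mul _
            (show Measurable fun y => ENNReal.ofReal (f x y) from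
              ENNReal.measurable_ofReal.comp (mf2 x))]
          apply lintegral_congr; intro y
          rw [← ENNReal.ofReal_mul (sq_nonneg _)]
      _ = ∫⁻ x, ENNReal.ofReal (h x ^ 2 * fX x) ∂μx := by
          apply lintegral_congr; intro x; rw [ENNReal.ofReal_mul (sq_nonneg _)]
      _ = M := by
          rw [hM]
          exact (ofReal_integral_eq_lintegral_ofReal hL2 (Filter.Eventually.of_forall
            fun x => mul_nonneg (sq_nonneg _) (hfX_pos x).le)).symm
  have hLBsq : ∀ y, LB y ^ 2 ≤ HF y * c y := by
    intro y
    have msq : Measurable fun x => Real.sqrt (f x y) :=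
      Real.continuous_sqrt.measurable.comp (mf1 y)
    have key := lintegral_cs μx
      (a := fun x => ENNReal.ofReal (|h x| * Real.sqrt (f x y)))
      (b := fun x => ENNReal.ofReal (Real.sqrt (f x y)))
      (ENNReal.measurable_ofReal.comp (mh.abs.mul msq)).aemeasurable
      (ENNReal.measurable_ofReal.comp msq).aemeasurable
    have e1 : ∀ x, ENNReal.ofReal (|h x| * Real.sqrt (f x y)) *
        ENNReal.ofReal (Real.sqrt (f x y)) = ENNReal.ofReal (|h x| * f x y) := by
      intro x
      rw [← ENNReal.ofReal_mul (mul_nonneg (abs_nonneg _) (Real.sqrt_nonneg _))]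
      congr 1; rw [mul_assoc, Real.mul_self_sqrt (hf_nonneg x y)]
    have e2 : ∀ x, (ENNReal.ofReal (|h x| * Real.sqrt (f x y))) ^ 2
        = ENNReal.ofReal (h x ^ 2 * f x y) := by
      intro x
      rw [← ENNReal.ofReal_pow (mul_nonneg (abs_nonneg _) (Real.sqrt_nonneg _))]
      congr 1; rw [mul_pow, sq_abs, Real.sq_sqrt (hf_nonneg x y)]
    have e3 : ∀ x, (ENNReal.ofReal (Real.sqrt (f x y))) ^ 2 = ENNReal.ofReal (f x y) := fun x => by
      rw [← ENNReal.ofReal_pow (Real.sqrt_nonneg _), Real.sq_sqrt (hf_nonneg x y)]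
    simp only [e1, e2, e3] at key
    rw [lmY y] at key
    simpa only [hLBdef, hHFdef] using key
  -- the invariant measure π
  set π : Measure Y := μy.withDensity c with hπ
  have hπlint : ∀ {φ : Y → ℝ≥0∞}, Measurable φ → ∫⁻ y, φ y ∂π = ∫⁻ y, φ y * c y ∂μy := by
    intro φ mφ
    rw [hπ, lintegral_withDensity_eq_lintegral_mul μy mc mφ]
    simp [mul_comm]
  have hπfin : π Set.univ ≠ ∞ := by
    have huniv : π Set.univ = ∫⁻ y, c y ∂μy := by
      rw [hπ, withDensity_apply _ MeasurableSet.univ, Measure.restrict_univ]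
    rw [huniv, hc, ← ofReal_integral_eq_lintegral_ofReal hfY_int
      (Filter.Eventually.of_forall fun y => (hfY_pos y).le)]
    exact ENNReal.ofReal_ne_top
  have hbind : π.bind (fun y => R y) = π := by
    ext Aset hA
    rw [Measure.bind_apply hA R.measurable.aemeasurable]
    have hmeasRA : Measurable fun y => (R y) Aset := R.measurable_coe hA
    have hint : Integrable (fun y => ((R y) Aset).toReal * fY y) μy := by
      refine Integrable.mono hfY_int (hmeasRA.ennreal_toReal.mul mfY).aestronglyMeasurable ?_
      refine Filter.Eventually.of_forall fun y => ?_
      rw [Real.norm_eq_abs, Real.norm_eq_abs,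
        abs_of_nonneg (mul_nonneg ENNReal.toReal_nonneg (hfY_pos y).le),
        abs_of_nonneg (hfY_pos y).le]
      have h1 : ((R y) Aset).toReal ≤ 1 :=
        ENNReal.toReal_le_of_le_ofReal zero_le_one (by simpa using prob_le_one)
      nlinarith [(hfY_pos y).le, ENNReal.toReal_nonneg (a := (R y) Aset)]
    have e2 : ENNReal.ofReal (∫ y, ((R y) Aset).toReal * fY y ∂μy)
        = ∫⁻ y, (R y) Aset * c y ∂μy := by
      rw [ofReal_integral_eq_lintegral_ofReal hint (Filter.Eventually.of_forall
        fun y => mul_nonneg ENNReal.toReal_nonneg (hfY_pos y).le)]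
      apply lintegral_congr; intro y
      rw [ENNReal.ofReal_mul ENNReal.toReal_nonneg, ENNReal.ofReal_toReal (measure_ne_top _ _)]
    have e3 : ENNReal.ofReal (∫ y in Aset, fY y ∂μy) = π Aset := by
      rw [ofReal_integral_eq_lintegral_ofReal hfY_int.restrict
        (Filter.Eventually.of_forall fun y => (hfY_pos y).le), hπ, withDensity_apply _ hA]
    calc ∫⁻ y, (R y) Aset ∂π = ∫⁻ y, (R y) Aset * c y ∂μy := hπlint hmeasRA
      _ = π Aset := by rw [← e2, hR_inv Aset hA, e3]
  have hinv : ∀ {φ : Y → ℝ≥0∞}, Measurable φ →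
      ∫⁻ y, (∫⁻ y', φ y' ∂(R y)) ∂π = ∫⁻ y, φ y ∂π := by
    intro φ mφ
    conv_rhs => rw [← hbind]
    rw [Measure.lintegral_bind R.measurable.aemeasurable mφ.aemeasurable]
  have haeμy : ∀ {P : Y → Prop}, (∀ᵐ y ∂π, P y) → ∀ᵐ y ∂μy, P y := by
    intro P hP
    rw [hπ, ae_withDensity_iff mc] at hP
    filter_upwards [hP] with y hy
    exact hy (hc0 y)
  -- pointwise relations between G, g, LB, HF
  have habsB : ∀ x y, |B x y| = |h x| * f x y := fun x y => by
    rw [hB]; dsimp only; rw [abs_mul, abs_of_nonneg (hf_nonneg x y)]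
  have habsG : ∀ y, ENNReal.ofReal |G y| ≤ LB y := by
    intro y
    have key := ofReal_abs_integral_le μx (fun x => B x y)
    simpa only [habsB, hLBdef, hG] using key
  have hgfY : ∀ y, g y * fY y = G y := fun y => div_mul_cancel₀ _ (hfY_pos y).ne'
  have hofG : ∀ y, ENNReal.ofReal |G y| = ENNReal.ofReal |g y| * c y := by
    intro y
    rw [← hgfY y, abs_mul, abs_of_nonneg (hfY_pos y).le, ENNReal.ofReal_mul (abs_nonneg _)]
  have hgsq : ∀ y, ENNReal.ofReal (g y ^ 2) * c y = ENNReal.ofReal (G y ^ 2 / fY y) := by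
    intro y
    rw [hc, ← ENNReal.ofReal_mul (sq_nonneg _)]
    congr 1
    rw [hg]; dsimp only
    rw [div_pow, pow_two (fY y), ← div_div, div_mul_cancel₀ _ (hfY_pos y).ne']
  have hGHF : ∀ y, ENNReal.ofReal (G y ^ 2 / fY y) ≤ HF y := by
    intro y
    rw [ENNReal.ofReal_div_of_pos (hfY_pos y)]
    have h1 : ENNReal.ofReal (G y ^ 2) ≤ LB y ^ 2 := by
      rw [← sq_abs (G y), ENNReal.ofReal_pow (abs_nonneg _)]
      exact pow_le_pow_left' (habsG y) 2
    calc ENNReal.ofReal (G y ^ 2) / c y ≤ LB y ^ 2 / c y := ENNReal.div_le_div_right h1 _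
      _ ≤ HF y * c y / c y := ENNReal.div_le_div_right (hLBsq y) _
      _ = HF y := by rw [mul_div_assoc, ENNReal.div_self (hc0 y) (hct y), mul_one]
  -- the function u and its kernel average Ru
  set u : Y → ℝ≥0∞ := fun y => (HF y / c y) ^ (1/2 : ℝ) with hu
  have mu : Measurable u :=
    ENNReal.continuous_rpow_const.measurable.comp (mHF.div mc)
  have husq : ∀ y, u y ^ 2 = HF y / c y := by
    intro y
    rw [hu]; dsimp only
    rw [← ENNReal.rpow_natCast ((HF y / c y) ^ (1/2 : ℝ)) 2, ← ENNReal.rpow_mul,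
      show (1/2 : ℝ) * ((2:ℕ):ℝ) = 1 by norm_num, ENNReal.rpow_one]
  have hu2π : ∫⁻ y, u y ^ 2 ∂π = M := by
    rw [hπlint (mu.pow_const 2), ← hHFM]
    apply lintegral_congr; intro y
    rw [husq y, ENNReal.div_mul_cancel (hc0 y) (hct y)]
  have hLBc : ∀ y, LB y / c y ≤ u y := by
    intro y
    have hsq : (LB y / c y) ^ 2 ≤ HF y / c y := by
      have hdp : (LB y / c y) ^ 2 = LB y ^ 2 / c y ^ 2 := by
        rw [div_eq_mul_inv, mul_pow, ← ENNReal.inv_pow, ← div_eq_mul_inv]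
      rw [hdp]
      calc LB y ^ 2 / c y ^ 2 ≤ HF y * c y / c y ^ 2 := ENNReal.div_le_div_right (hLBsq y) _
        _ = HF y / c y := by
            rw [sq, ENNReal.mul_div_mul_right _ _ (hc0 y) (hct y)]
    have := ennreal_le_of_sq_le_sq (a := LB y / c y) (b := u y) ?_
    · exact this
    · rw [husq y]; exact hsq
  have hLBuc : ∀ y, LB y ≤ u y * c y := by
    intro y
    calc LB y = LB y / c y * c y := (ENNReal.div_mul_cancel (hc0 y) (hct y)).symm
      _ ≤ u y * c y := mul_le_mul_left (hLBc y) _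
  have hgu : ∀ y, ENNReal.ofReal |g y| ≤ u y := by
    intro y
    apply ennreal_le_of_sq_le_sq
    rw [← ENNReal.ofReal_pow (abs_nonneg _), sq_abs, husq y,
      ENNReal.le_div_iff_mul_le (Or.inl (hc0 y)) (Or.inl (hct y)), hgsq y]
    exact hGHF y
  set Ru : Y → ℝ≥0∞ := fun y => ∫⁻ y', u y' ∂(R y) with hRu
  have mRu : Measurable Ru := Measurable.lintegral_kernel (κ := R) mu
  have hRusq : ∀ y, Ru y ^ 2 ≤ ∫⁻ y', u y' ^ 2 ∂(R y) := by
    intro y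
    have key := lintegral_cs (R y) mu.aemeasurable (aemeasurable_const (b := (1:ℝ≥0∞)))
    simpa [measure_univ] using key
  have hRu2π : ∫⁻ y, Ru y ^ 2 ∂π ≤ M := by
    calc ∫⁻ y, Ru y ^ 2 ∂π ≤ ∫⁻ y, (∫⁻ y', u y' ^ 2 ∂(R y)) ∂π :=
          lintegral_mono fun y => hRusq y
      _ = ∫⁻ y, u y ^ 2 ∂π := hinv (mu.pow_const 2)
      _ = M := hu2π
  have KB1 : ∫⁻ y, u y * Ru y ∂π ≤ M := by
    apply ennreal_le_of_sq_le_sq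
    calc (∫⁻ y, u y * Ru y ∂π) ^ 2 ≤ (∫⁻ y, u y ^ 2 ∂π) * (∫⁻ y, Ru y ^ 2 ∂π) :=
          lintegral_cs π mu.aemeasurable mRu.aemeasurable
      _ ≤ M * M := mul_le_mul' hu2π.le hRu2π
      _ = M ^ 2 := (sq M).symm
  have hufinπ : ∫⁻ y, u y ∂π ≠ ∞ := by
    intro hcon
    have h2 : (∫⁻ y, u y ∂π) ^ 2 ≤ M * π Set.univ := by
      have key := lintegral_cs π mu.aemeasurable (aemeasurable_const (b := (1:ℝ≥0∞)))
      simpa [hu2π, lintegral_one, measure_univ] using key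
    rw [hcon] at h2
    rw [ENNReal.top_pow (by norm_num), top_le_iff] at h2
    exact ENNReal.mul_ne_top hMne hπfin h2
  have KB2 : ∫⁻ y, Ru y ∂π ≠ ∞ := by
    rw [hinv mu]; exact hufinπ
  -- the auxiliary quantity S and its a.e. finiteness
  set S : X → ℝ≥0∞ := fun x => ∫⁻ y, ENNReal.ofReal (f x y) * u y ^ 2 ∂μy with hS
  have mSint : Measurable fun q : X × Y => ENNReal.ofReal (f q.1 q.2) * u q.2 ^ 2 :=
    (ENNReal.measurable_ofReal.comp mf).mul ((mu.pow_const 2).comp measurable_snd)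
  have mS : Measurable S := Measurable.lintegral_prod_right' mSint
  have hSfin : ∀ᵐ x ∂μx, S x < ∞ := by
    apply ae_lt_top mS
    have hswap : ∫⁻ x, S x ∂μx = ∫⁻ y, (∫⁻ x, ENNReal.ofReal (f x y) ∂μx) * u y ^ 2 ∂μy := by
      simp only [hS]
      rw [lintegral_lintegral_swap mSint.aemeasurable]
      apply lintegral_congr; intro y
      exact lintegral_mul_const _ (ENNReal.measurable_ofReal.comp (mf1 y))
    rw [hswap]
    have : ∫⁻ y, (∫⁻ x, ENNReal.ofReal (f x y) ∂μx) * u y ^ 2 ∂μy = ∫⁻ y, HF y ∂μy := by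
      apply lintegral_congr; intro y
      rw [lmY y, husq y, mul_comm, ENNReal.div_mul_cancel (hc0 y) (hct y)]
    rw [this, hHFM]
    exact hMne
  -- the kernel-averaged absolute value LA and the quantity W
  have hAabs : ∀ x y, ENNReal.ofReal |A x y| = ENNReal.ofReal (|h x| * f x y) / c y := by
    intro x y
    rw [hA]; dsimp only
    rw [abs_div, abs_of_nonneg (hfY_pos y).le, ENNReal.ofReal_div_of_pos (hfY_pos y), abs_mul,
      abs_of_nonneg (hf_nonneg x y), hc]
  set LA : X → Y → ℝ≥0∞ := fun x y => ∫⁻ y', ENNReal.ofReal |A x y'| ∂(R y) with hLA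
  have mabsA : Measurable fun q : X × Y => ENNReal.ofReal |A q.1 q.2| :=
    ENNReal.measurable_ofReal.comp mA.abs
  have mLA : Measurable fun q : X × Y => LA q.1 q.2 := by
    have hrw : (fun q : X × Y => LA q.1 q.2)
        = fun q : X × Y => ∫⁻ y', ENNReal.ofReal |A q.1 y'| ∂(((Kernel.comap R Prod.snd measurable_snd : Kernel (X × Y) Y)) q) := by
      funext q; rw [hLA]; dsimp only; rw [Kernel.comap_apply]
    rw [hrw]
    exact Measurable.lintegral_kernel_prod_right' (κ := (Kernel.comap R Prod.snd measurable_snd : Kernel (X × Y) Y))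
      (f := fun r : (X × Y) × Y => ENNReal.ofReal |A r.1.1 r.2|)
      (mabsA.comp ((measurable_fst.fst).prodMk measurable_snd))
  have hlintA : ∀ y, ∫⁻ x, ENNReal.ofReal |A x y| ∂μx = LB y / c y := by
    intro y
    simp only [hAabs, div_eq_mul_inv]
    rw [lintegral_mul_const' _ _ (by simp [hc0 y] : (c y)⁻¹ ≠ ∞)]
  have hlintLA : ∀ y, ∫⁻ x, LA x y ∂μx = ∫⁻ y', LB y' / c y' ∂(R y) := by
    intro y
    simp only [hLA]
    rw [lintegral_lintegral_swap (μ := μx) (ν := R y)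
      (f := fun x y' => ENNReal.ofReal |A x y'|) mabsA.aemeasurable]
    exact lintegral_congr hlintA
  have hlintLAle : ∀ y, ∫⁻ x, LA x y ∂μx ≤ Ru y := by
    intro y
    rw [hlintLA y, hRu]
    exact lintegral_mono hLBc
  set W : X → ℝ≥0∞ := fun x => ∫⁻ y, LA x y * (u y * c y) ∂μy with hW
  have mWint : Measurable fun q : X × Y => LA q.1 q.2 * (u q.2 * c q.2) :=
    mLA.mul ((mu.mul mc).comp measurable_snd)
  have mW : Measurable W := Measurable.lintegral_prod_right' mWint
  have hWfin : ∀ᵐ x ∂μx, W x < ∞ := by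
    apply ae_lt_top mW
    refine ne_top_of_le_ne_top hMne ?_
    have hswap : ∫⁻ x, W x ∂μx = ∫⁻ y, (∫⁻ x, LA x y ∂μx) * (u y * c y) ∂μy := by
      simp only [hW]
      rw [lintegral_lintegral_swap mWint.aemeasurable]
      apply lintegral_congr; intro y
      exact lintegral_mul_const _ (mLA.comp (measurable_id.prodMk measurable_const))
    rw [hswap]
    calc ∫⁻ y, (∫⁻ x, LA x y ∂μx) * (u y * c y) ∂μy
        ≤ ∫⁻ y, Ru y * (u y * c y) ∂μy :=
          lintegral_mono fun y => mul_le_mul_left (hlintLAle y) _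
      _ = ∫⁻ y, (u y * Ru y) * c y ∂μy := by apply lintegral_congr; intro y; ring
      _ = ∫⁻ y, u y * Ru y ∂π := (hπlint (mu.mul mRu)).symm
      _ ≤ M := KB1
  -- the kernel average Φ of g
  set Φ : Y → ℝ := fun y => ∫ y', g y' ∂(R y) with hΦ
  have mΦ : StronglyMeasurable Φ :=
    MeasureTheory.StronglyMeasurable.integral_kernel_prod_right' (κ := R)
      (f := fun q : Y × Y => g q.2) (mg.comp measurable_snd).stronglyMeasurable
  have hΦabs : ∀ y, ENNReal.ofReal |Φ y| ≤ ∫⁻ y', ENNReal.ofReal |g y'| ∂(R y) :=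
    fun y => ofReal_abs_integral_le (R y) g
  have hofg2 : ∀ y, (ENNReal.ofReal |g y|) ^ 2 = ENNReal.ofReal (g y ^ 2) := fun y => by
    rw [← ENNReal.ofReal_pow (abs_nonneg _), sq_abs]
  have mgabs : Measurable fun y => ENNReal.ofReal |g y| :=
    ENNReal.measurable_ofReal.comp mg.abs
  have mgsq : Measurable fun y => ENNReal.ofReal (g y ^ 2) :=
    ENNReal.measurable_ofReal.comp (mg.pow_const 2)
  have hΦsq : ∀ y, (ENNReal.ofReal |Φ y|) ^ 2 ≤ ∫⁻ y', ENNReal.ofReal (g y' ^ 2) ∂(R y) := by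
    intro y
    calc (ENNReal.ofReal |Φ y|) ^ 2 ≤ (∫⁻ y', ENNReal.ofReal |g y'| ∂(R y)) ^ 2 :=
          pow_le_pow_left' (hΦabs y) 2
      _ ≤ (∫⁻ y', (ENNReal.ofReal |g y'|) ^ 2 ∂(R y)) * (∫⁻ y', (1:ℝ≥0∞) ∂(R y)) := by
          have key := lintegral_cs (R y) mgabs.aemeasurable (aemeasurable_const (b := (1:ℝ≥0∞)))
          simpa using key
      _ = ∫⁻ y', ENNReal.ofReal (g y' ^ 2) ∂(R y) := by
          simp only [lintegral_one, measure_univ, mul_one, hofg2]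
  have mΦabs : Measurable fun y => ENNReal.ofReal |Φ y| :=
    ENNReal.measurable_ofReal.comp mΦ.measurable.abs
  have hΦ2π : ∫⁻ y, (ENNReal.ofReal |Φ y|) ^ 2 ∂π ≤ ∫⁻ y, ENNReal.ofReal (g y ^ 2) ∂π :=
    le_trans (lintegral_mono fun y => hΦsq y) (le_of_eq (hinv mgsq))
  have hQeq : ∫⁻ y, ENNReal.ofReal (g y ^ 2) ∂π = ∫⁻ y, ENNReal.ofReal (G y ^ 2 / fY y) ∂μy := by
    rw [hπlint mgsq]
    exact lintegral_congr hgsq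
  have hQle : ∫⁻ y, ENNReal.ofReal (g y ^ 2) ∂π ≤ M := by
    rw [hQeq, ← hHFM]
    exact lintegral_mono fun y => hGHF y
  have hGsq_meas : Measurable fun y => G y ^ 2 / fY y := (mG.measurable.pow_const 2).div mfY
  have hRHSval : ∫ y, G y ^ 2 / fY y ∂μy = (∫⁻ y, ENNReal.ofReal (G y ^ 2 / fY y) ∂μy).toReal :=
    integral_eq_lintegral_of_nonneg_ae
      (Filter.Eventually.of_forall fun y => div_nonneg (sq_nonneg _) (hfY_pos y).le)
      hGsq_meas.aestronglyMeasurable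
  have T3 : ∫ y, Φ y * G y ∂μy ≤ ∫ y, G y ^ 2 / fY y ∂μy := by
    by_cases hint : Integrable (fun y => Φ y * G y) μy
    · have step1 : ∫ y, Φ y * G y ∂μy ≤ (∫⁻ y, ENNReal.ofReal |Φ y * G y| ∂μy).toReal := by
        have h1 : ∫ y, Φ y * G y ∂μy ≤ ∫ y, |Φ y * G y| ∂μy :=
          integral_mono hint hint.abs fun y => le_abs_self _
        have h2 : ∫ y, |Φ y * G y| ∂μy = (∫⁻ y, ENNReal.ofReal |Φ y * G y| ∂μy).toReal :=
          integral_eq_lintegral_of_nonneg_ae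
            (Filter.Eventually.of_forall fun y => abs_nonneg _)
            (mΦ.measurable.mul mG.measurable).abs.aestronglyMeasurable
        linarith
      have step2 : ∫⁻ y, ENNReal.ofReal |Φ y * G y| ∂μy ≤ ∫⁻ y, ENNReal.ofReal (g y ^ 2) ∂π := by
        have e : ∀ y, ENNReal.ofReal |Φ y * G y|
            = (ENNReal.ofReal |Φ y| * ENNReal.ofReal |g y|) * c y := by
          intro y
          rw [abs_mul, ENNReal.ofReal_mul (abs_nonneg _), hofG y]
          ring
        have hQhalf : ∀ {v : Y → ℝ≥0∞}, Measurable v →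
            (∫⁻ y, v y ^ 2 ∂π ≤ ∫⁻ y, ENNReal.ofReal (g y ^ 2) ∂π) →
            (∫⁻ y, v y ^ 2 ∂π) ^ (1/2:ℝ) ≤ (∫⁻ y, ENNReal.ofReal (g y ^ 2) ∂π) ^ (1/2:ℝ) :=
          fun _ hle => ENNReal.rpow_le_rpow hle (by norm_num)
        calc ∫⁻ y, ENNReal.ofReal |Φ y * G y| ∂μy
            = ∫⁻ y, (ENNReal.ofReal |Φ y| * ENNReal.ofReal |g y|) * c y ∂μy := lintegral_congr e
          _ = ∫⁻ y, ENNReal.ofReal |Φ y| * ENNReal.ofReal |g y| ∂π :=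
              (hπlint (mΦabs.mul mgabs)).symm
          _ ≤ (∫⁻ y, (ENNReal.ofReal |Φ y|) ^ 2 ∂π) ^ (1/2:ℝ)
              * (∫⁻ y, (ENNReal.ofReal |g y|) ^ 2 ∂π) ^ (1/2:ℝ) := by
              have hpq : Real.HolderConjugate 2 2 := Real.HolderConjugate.two_two
              have key := ENNReal.lintegral_mul_le_Lp_mul_Lq π hpq
                mΦabs.aemeasurable mgabs.aemeasurable
              simp only [Pi.mul_apply] at key
              have h2 : ∀ cc : ℝ≥0∞, cc ^ (2:ℝ) = cc ^ (2:ℕ) := fun cc => by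
                rw [← ENNReal.rpow_natCast cc 2]; norm_num
              simpa only [h2] using key
          _ ≤ (∫⁻ y, ENNReal.ofReal (g y ^ 2) ∂π) ^ (1/2:ℝ)
              * (∫⁻ y, ENNReal.ofReal (g y ^ 2) ∂π) ^ (1/2:ℝ) := by
              refine mul_le_mul' (ENNReal.rpow_le_rpow hΦ2π (by norm_num)) ?_
              refine ENNReal.rpow_le_rpow (le_of_eq ?_) (by norm_num)
              exact lintegral_congr hofg2
          _ = ∫⁻ y, ENNReal.ofReal (g y ^ 2) ∂π := by
              rw [← sq, ← ENNReal.rpow_natCast ((∫⁻ y, ENNReal.ofReal (g y ^ 2) ∂π) ^ (1/2:ℝ)) 2,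
                ← ENNReal.rpow_mul, show (1/2:ℝ) * ((2:ℕ):ℝ) = 1 by norm_num, ENNReal.rpow_one]
      calc ∫ y, Φ y * G y ∂μy ≤ (∫⁻ y, ENNReal.ofReal |Φ y * G y| ∂μy).toReal := step1
        _ ≤ (∫⁻ y, ENNReal.ofReal (g y ^ 2) ∂π).toReal :=
            ENNReal.toReal_mono (ne_top_of_le_ne_top hMne hQle) step2
        _ = (∫⁻ y, ENNReal.ofReal (G y ^ 2 / fY y) ∂μy).toReal := by rw [hQeq]
        _ = ∫ y, G y ^ 2 / fY y ∂μy := hRHSval.symm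
    · rw [integral_undef hint]
      exact integral_nonneg fun y => div_nonneg (sq_nonneg _) (hfY_pos y).le
  -- pointwise identity for the DA chain
  have hpt1 : ∀ x x', h x * h x' * p x x' * fX x' = ∫ y, A x y * B x' y ∂μy := by
    intro x x'
    rw [hp x x', show h x * h x' * (∫ y, fXY x y * fYX y x' ∂μy) * fX x'
        = (h x * (h x' * fX x')) * ∫ y, fXY x y * fYX y x' ∂μy from by ring,
      ← integral_const_mul]
    refine integral_congr_ae (Filter.Eventually.of_forall fun y => ?_)
    show h x * (h x' * fX x') * (fXY x y * fYX y x') = A x y * B x' y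
    rw [hfXY, hfYX, hA, hB]; dsimp only
    field_simp [(hfX_pos x').ne', (hfY_pos y).ne']
  have mABx : ∀ x, Measurable fun z : X × Y => A x z.2 * B z.1 z.2 := fun x =>
    (mA.comp (measurable_const.prodMk measurable_snd)).mul mB
  have hofh2 : ∀ r : ℝ, (ENNReal.ofReal |r|) ^ 2 = ENNReal.ofReal (r ^ 2) := fun r => by
    rw [← ENNReal.ofReal_pow (abs_nonneg _), sq_abs]
  have hlintAB : ∀ x, ∫⁻ z : X × Y, ENNReal.ofReal |A x z.2 * B z.1 z.2| ∂(μx.prod μy)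
      = ∫⁻ y, ENNReal.ofReal |A x y| * LB y ∂μy := by
    intro x
    rw [lintegral_prod_symm (fun z : X × Y => ENNReal.ofReal |A x z.2 * B z.1 z.2|)
      (ENNReal.measurable_ofReal.comp (mABx x).abs).aemeasurable]
    apply lintegral_congr; intro y
    have e : ∀ x', ENNReal.ofReal |A x y * B x' y|
        = ENNReal.ofReal |A x y| * ENNReal.ofReal (|h x'| * f x' y) := by
      intro x'
      rw [abs_mul, ENNReal.ofReal_mul (abs_nonneg _), habsB]
    simp only [e]
    rw [lintegral_const_mul _ (show Measurable fun x' => ENNReal.ofReal (|h x'| * f x' y) from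
      ENNReal.measurable_ofReal.comp (mh.abs.mul (mf1 y)))]
  have hABbound : ∀ x y, ENNReal.ofReal |A x y| * LB y
      ≤ ENNReal.ofReal (|h x| * f x y) * u y := by
    intro x y
    calc ENNReal.ofReal |A x y| * LB y
        = ENNReal.ofReal (|h x| * f x y) / c y * LB y := by rw [hAabs]
      _ ≤ ENNReal.ofReal (|h x| * f x y) / c y * (u y * c y) := mul_le_mul_right (hLBuc y) _
      _ = ENNReal.ofReal (|h x| * f x y) * u y := by
          rw [div_eq_mul_inv, mul_comm (u y) (c y), ← mul_assoc,
            mul_assoc (ENNReal.ofReal (|h x| * f x y)) ((c y)⁻¹) (c y),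
            ENNReal.inv_mul_cancel (hc0 y) (hct y), mul_one]
  have hT1int : ∀ᵐ x ∂μx, Integrable (Function.uncurry fun x' y => A x y * B x' y) (μx.prod μy) := by
    filter_upwards [hSfin] with x hSx
    refine ⟨(mABx x).aestronglyMeasurable, ?_⟩
    rw [hasFiniteIntegral_iff_norm]
    have huncurry : ∀ z : X × Y, (Function.uncurry fun x' y => A x y * B x' y) z
        = A x z.2 * B z.1 z.2 := fun z => rfl
    simp only [huncurry, Real.norm_eq_abs]
    have hfin : ∫⁻ y, ENNReal.ofReal (|h x| * f x y) * u y ∂μy ≠ ∞ := by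
      have hcs := lintegral_cs_weight μy (ρ := fun y => f x y) (hf_nonneg x) (mf2 x)
        (φ := fun _ => ENNReal.ofReal |h x|) measurable_const mu
      have e1 : ∀ y, ENNReal.ofReal (f x y) * (ENNReal.ofReal |h x| * u y)
          = ENNReal.ofReal (|h x| * f x y) * u y := by
        intro y; rw [ENNReal.ofReal_mul (abs_nonneg _)]; ring
      have e2 : ∀ y, ENNReal.ofReal (f x y) * (ENNReal.ofReal |h x|) ^ 2
          = ENNReal.ofReal (h x ^ 2 * f x y) := by
        intro y
        rw [hofh2, mul_comm, ← ENNReal.ofReal_mul (sq_nonneg _)]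
      simp only [e1, e2] at hcs
      have hfirst : ∫⁻ y, ENNReal.ofReal (h x ^ 2 * f x y) ∂μy
          = ENNReal.ofReal (h x ^ 2) * ENNReal.ofReal (fX x) := by
        have e3 : ∀ y, ENNReal.ofReal (h x ^ 2 * f x y)
            = ENNReal.ofReal (h x ^ 2) * ENNReal.ofReal (f x y) := fun y =>
          ENNReal.ofReal_mul (sq_nonneg _)
        simp only [e3]
        rw [lintegral_const_mul _ (show Measurable fun y => ENNReal.ofReal (f x y) from
          ENNReal.measurable_ofReal.comp (mf2 x)), lmX x]
      rw [hfirst] at hcs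
      intro hcon
      rw [hcon, ENNReal.top_pow (by norm_num)] at hcs
      rw [top_le_iff] at hcs
      exact (ENNReal.mul_ne_top
        (ENNReal.mul_ne_top ENNReal.ofReal_ne_top ENNReal.ofReal_ne_top) hSx.ne) hcs
    calc ∫⁻ z : X × Y, ENNReal.ofReal |A x z.2 * B z.1 z.2| ∂(μx.prod μy)
        = ∫⁻ y, ENNReal.ofReal |A x y| * LB y ∂μy := hlintAB x
      _ ≤ ∫⁻ y, ENNReal.ofReal (|h x| * f x y) * u y ∂μy :=
          lintegral_mono fun y => hABbound x y
      _ < ∞ := hfin.lt_top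
  have hswap1 : ∀ᵐ x ∂μx, (∫ x', ∫ y, A x y * B x' y ∂μy ∂μx) = ∫ y, A x y * G y ∂μy := by
    filter_upwards [hT1int] with x hint
    rw [integral_integral_swap hint]
    congr 1; funext y
    rw [integral_const_mul]
  have mAG : Measurable fun z : X × Y => A z.1 z.2 * G z.2 :=
    mA.mul (mG.measurable.comp measurable_snd)
  have hintAG : Integrable (Function.uncurry fun x y => A x y * G y) (μx.prod μy) := by
    refine ⟨mAG.aestronglyMeasurable, ?_⟩
    rw [hasFiniteIntegral_iff_norm]
    have huncurry : ∀ z : X × Y, (Function.uncurry fun x y => A x y * G y) z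
        = A z.1 z.2 * G z.2 := fun z => rfl
    simp only [huncurry, Real.norm_eq_abs]
    calc ∫⁻ z : X × Y, ENNReal.ofReal |A z.1 z.2 * G z.2| ∂(μx.prod μy)
        = ∫⁻ y, (LB y / c y) * ENNReal.ofReal |G y| ∂μy := by
          rw [lintegral_prod_symm (fun z : X × Y => ENNReal.ofReal |A z.1 z.2 * G z.2|)
            (ENNReal.measurable_ofReal.comp mAG.abs).aemeasurable]
          apply lintegral_congr; intro y
          have e : ∀ x, ENNReal.ofReal |A x y * G y|
              = ENNReal.ofReal |A x y| * ENNReal.ofReal |G y| := fun x => by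
            rw [abs_mul, ENNReal.ofReal_mul (abs_nonneg _)]
          simp only [e]
          rw [lintegral_mul_const' _ _ ENNReal.ofReal_ne_top, hlintA y]
      _ ≤ ∫⁻ y, u y * (u y * c y) ∂μy := by
          refine lintegral_mono fun y => mul_le_mul' (hLBc y) ?_
          rw [hofG y]
          exact mul_le_mul_left (hgu y) _
      _ = ∫⁻ y, u y ^ 2 ∂π := by
          rw [hπlint (mu.pow_const 2)]
          apply lintegral_congr; intro y
          ring
      _ < ∞ := by rw [hu2π]; exact hMne.lt_top
  have T1 : ∫ x, (∫ x', h x * h x' * p x x' * fX x' ∂μx) ∂μx = ∫ y, G y ^ 2 / fY y ∂μy := by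
    have e1 : ∫ x, (∫ x', h x * h x' * p x x' * fX x' ∂μx) ∂μx
        = ∫ x, (∫ y, A x y * G y ∂μy) ∂μx := by
      refine integral_congr_ae ?_
      filter_upwards [hswap1] with x hx
      rw [← hx]
      congr 1; funext x'
      exact hpt1 x x'
    rw [e1, integral_integral_swap hintAG]
    congr 1; funext y
    rw [integral_mul_const]
    have e2 : ∫ x, A x y ∂μx = g y := by
      rw [hg]; dsimp only
      rw [hG]; dsimp only
      rw [← integral_div]
    rw [e2, hg]; dsimp only
    rw [div_mul_eq_mul_div, ← sq]
  -- the kernel-smoothed function Ti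
  set Ti : X → Y → ℝ := fun x y => ∫ y', A x y' ∂(R y) with hTi
  have mTi : Measurable fun q : X × Y => Ti q.1 q.2 := by
    have hrw : (fun q : X × Y => Ti q.1 q.2)
        = fun q : X × Y => ∫ y', A q.1 y' ∂((Kernel.comap R Prod.snd measurable_snd : Kernel (X × Y) Y) q) := by
      funext q; rw [hTi]; dsimp only; rw [Kernel.comap_apply]
    rw [hrw]
    exact (MeasureTheory.StronglyMeasurable.integral_kernel_prod_right'
      (κ := (Kernel.comap R Prod.snd measurable_snd : Kernel (X × Y) Y))
      (f := fun r : (X × Y) × Y => A r.1.1 r.2)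
      (mA.comp ((measurable_fst.fst).prodMk measurable_snd)).stronglyMeasurable).measurable
  have hTiabs : ∀ x y, ENNReal.ofReal |Ti x y| ≤ LA x y := fun x y =>
    ofReal_abs_integral_le (R y) (fun y' => A x y')
  -- pointwise identity for the pR chain
  have hpt2 : ∀ x x', h x * h x' * pR x x' * fX x' = ∫ y, Ti x y * B x' y ∂μy := by
    intro x x'
    rw [hpR x x', show h x * h x' * (∫ y, (∫ y', fXY x y' ∂(R y)) * fYX y x' ∂μy) * fX x'
        = (h x * (h x' * fX x')) * ∫ y, (∫ y', fXY x y' ∂(R y)) * fYX y x' ∂μy from by ring,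
      ← integral_const_mul]
    refine integral_congr_ae (Filter.Eventually.of_forall fun y => ?_)
    show h x * (h x' * fX x') * ((∫ y', fXY x y' ∂(R y)) * fYX y x') = Ti x y * B x' y
    have hTieq : Ti x y = h x * ∫ y', fXY x y' ∂(R y) := by
      rw [hTi]; dsimp only
      rw [← integral_const_mul]
      refine integral_congr_ae (Filter.Eventually.of_forall fun y' => ?_)
      show A x y' = h x * fXY x y'
      rw [hA, hfXY]; dsimp only
      ring
    rw [hTieq, hfYX, hB]; dsimp only
    field_simp [(hfX_pos x').ne']
  -- a.e. swap of the inner double integral for the pR chain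
  have mTBx : ∀ x, Measurable fun z : X × Y => Ti x z.2 * B z.1 z.2 := fun x =>
    (mTi.comp (measurable_const.prodMk measurable_snd)).mul mB
  have hT2int : ∀ᵐ x ∂μx,
      Integrable (Function.uncurry fun x' y => Ti x y * B x' y) (μx.prod μy) := by
    filter_upwards [hWfin] with x hWx
    refine ⟨(mTBx x).aestronglyMeasurable, ?_⟩
    rw [hasFiniteIntegral_iff_norm]
    have huncurry : ∀ z : X × Y, (Function.uncurry fun x' y => Ti x y * B x' y) z
        = Ti x z.2 * B z.1 z.2 := fun z => rfl
    simp only [huncurry, Real.norm_eq_abs]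
    calc ∫⁻ z : X × Y, ENNReal.ofReal |Ti x z.2 * B z.1 z.2| ∂(μx.prod μy)
        = ∫⁻ y, ENNReal.ofReal |Ti x y| * LB y ∂μy := by
          rw [lintegral_prod_symm (fun z : X × Y => ENNReal.ofReal |Ti x z.2 * B z.1 z.2|)
            (ENNReal.measurable_ofReal.comp (mTBx x).abs).aemeasurable]
          apply lintegral_congr; intro y
          have e : ∀ x', ENNReal.ofReal |Ti x y * B x' y|
              = ENNReal.ofReal |Ti x y| * ENNReal.ofReal (|h x'| * f x' y) := by
            intro x'
            rw [abs_mul, ENNReal.ofReal_mul (abs_nonneg _), habsB]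
          simp only [e]
          rw [lintegral_const_mul _ (show Measurable fun x' => ENNReal.ofReal (|h x'| * f x' y)
            from ENNReal.measurable_ofReal.comp (mh.abs.mul (mf1 y)))]
      _ ≤ ∫⁻ y, LA x y * (u y * c y) ∂μy :=
          lintegral_mono fun y => mul_le_mul (hTiabs x y) (hLBuc y) zero_le zero_le
      _ < ∞ := hWx
  have hswap2 : ∀ᵐ x ∂μx, (∫ x', ∫ y, Ti x y * B x' y ∂μy ∂μx) = ∫ y, Ti x y * G y ∂μy := by
    filter_upwards [hT2int] with x hint
    rw [integral_integral_swap hint]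
    congr 1; funext y
    rw [integral_const_mul]
  -- integrability of (x, y) ↦ Ti x y * G y on the product
  have mTG : Measurable fun z : X × Y => Ti z.1 z.2 * G z.2 :=
    mTi.mul (mG.measurable.comp measurable_snd)
  have hintTG : Integrable (Function.uncurry fun x y => Ti x y * G y) (μx.prod μy) := by
    refine ⟨mTG.aestronglyMeasurable, ?_⟩
    rw [hasFiniteIntegral_iff_norm]
    have huncurry : ∀ z : X × Y, (Function.uncurry fun x y => Ti x y * G y) z
        = Ti z.1 z.2 * G z.2 := fun z => rfl
    simp only [huncurry, Real.norm_eq_abs]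
    calc ∫⁻ z : X × Y, ENNReal.ofReal |Ti z.1 z.2 * G z.2| ∂(μx.prod μy)
        = ∫⁻ y, (∫⁻ x, ENNReal.ofReal |Ti x y| ∂μx) * ENNReal.ofReal |G y| ∂μy := by
          rw [lintegral_prod_symm (fun z : X × Y => ENNReal.ofReal |Ti z.1 z.2 * G z.2|)
            (ENNReal.measurable_ofReal.comp mTG.abs).aemeasurable]
          apply lintegral_congr; intro y
          have e : ∀ x, ENNReal.ofReal |Ti x y * G y|
              = ENNReal.ofReal |Ti x y| * ENNReal.ofReal |G y| := fun x => by
            rw [abs_mul, ENNReal.ofReal_mul (abs_nonneg _)]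
          simp only [e]
          rw [lintegral_mul_const' _ _ ENNReal.ofReal_ne_top]
      _ ≤ ∫⁻ y, Ru y * (u y * c y) ∂μy := by
          refine lintegral_mono fun y => mul_le_mul ?_ ?_ zero_le zero_le
          · refine le_trans (lintegral_mono fun x => hTiabs x y) (hlintLAle y)
          · rw [hofG y]
            exact mul_le_mul_left (hgu y) _
      _ = ∫⁻ y, u y * Ru y ∂π := by
          rw [hπlint (φ := fun y => u y * Ru y) (mu.mul mRu)]
          apply lintegral_congr; intro y
          ring
      _ < ∞ := (ne_top_of_le_ne_top hMne KB1).lt_top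
  -- a.e. identity for the inner x-integral
  have hRufin : ∀ᵐ y ∂μy, Ru y < ∞ := haeμy (ae_lt_top mRu KB2)
  have hinner : ∀ᵐ y ∂μy, (∫ x, Ti x y * G y ∂μx) = Φ y * G y := by
    filter_upwards [hRufin] with y hy
    rw [integral_mul_const]
    congr 1
    have mAxy : Measurable fun z : X × Y => A z.1 z.2 := mA
    have hintA : Integrable (Function.uncurry fun x y' => A x y') (μx.prod (R y)) := by
      refine ⟨mA.aestronglyMeasurable, ?_⟩
      rw [hasFiniteIntegral_iff_norm]
      have huncurry : ∀ z : X × Y, (Function.uncurry fun x y' => A x y') z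
          = A z.1 z.2 := fun z => rfl
      simp only [huncurry, Real.norm_eq_abs]
      calc ∫⁻ z : X × Y, ENNReal.ofReal |A z.1 z.2| ∂(μx.prod (R y))
          = ∫⁻ y', ∫⁻ x, ENNReal.ofReal |A x y'| ∂μx ∂(R y) :=
            lintegral_prod_symm (fun z : X × Y => ENNReal.ofReal |A z.1 z.2|)
              mabsA.aemeasurable
        _ = ∫⁻ y', LB y' / c y' ∂(R y) := lintegral_congr hlintA
        _ ≤ Ru y := lintegral_mono hLBc
        _ < ∞ := hy
    have hsw := integral_integral_swap hintA
    rw [hTi]; dsimp only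
    rw [hsw]
    refine integral_congr_ae (Filter.Eventually.of_forall fun y' => ?_)
    show ∫ x, A x y' ∂μx = g y'
    rw [hg]; dsimp only
    rw [hG]; dsimp only
    rw [← integral_div]
  -- identity for the pR chain
  have T2 : ∫ x, (∫ x', h x * h x' * pR x x' * fX x' ∂μx) ∂μx = ∫ y, Φ y * G y ∂μy := by
    have e1 : ∫ x, (∫ x', h x * h x' * pR x x' * fX x' ∂μx) ∂μx
        = ∫ x, (∫ y, Ti x y * G y ∂μy) ∂μx := by
      refine integral_congr_ae ?_
      filter_upwards [hswap2] with x hx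
      rw [← hx]
      congr 1; funext x'
      exact hpt2 x x'
    rw [e1, integral_integral_swap hintTG]
    exact integral_congr_ae hinner
  rw [T1, T2]
  exact T3
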